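/- Let λ, μ ≥ 0, f₁(x) = 1/(λ+x), f₂(x) = 1/(μ+x). Let Φ : Mₘ(ℂ) → Mₙ(ℂ) be a positive linear map and K ∈ Mₙ(ℂ). Then the map X ↦ Tr(Φ(f₁(X)) K* Φ(f₂(X)) K) is convex on positive definite m×m matrices. -/

import Mathlib

open Matrix ComplexOrder

section AuxTraceResolvent

lemma aux_psd_trace_nonneg {n : ℕ} {M : Matrix (Fin n) (Fin n) ℂ} (hM : M.PosSemidef) :
    (0:ℂ) ≤ M.trace := by
  have h : ∀ i, (0:ℂ) ≤ M i i := by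
    intro i
    have := hM.dotProduct_mulVec_nonneg (Pi.single i 1)
    simpa [dotProduct, mulVec, Pi.single_apply, Finset.sum_ite_eq, Finset.sum_ite_eq'] using this
  rw [Matrix.trace]
  exact Finset.sum_nonneg fun i _ => h i

open scoped MatrixOrder in
lemma aux_sqrt_exists {n : ℕ} {S : Matrix (Fin n) (Fin n) ℂ} (hS : S.PosSemidef) :
    ∃ R : Matrix (Fin n) (Fin n) ℂ, R.PosSemidef ∧ R * R = S :=
  ⟨CFC.sqrt S, (CFC.sqrt_nonneg S).posSemidef, CFC.sqrt_mul_sqrt_self S hS.nonneg⟩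

lemma aux_trace_pair_nonneg {n : ℕ} (K : Matrix (Fin n) (Fin n) ℂ)
    {S T : Matrix (Fin n) (Fin n) ℂ} (hS : S.PosSemidef) (hT : T.PosSemidef) :
    (0:ℂ) ≤ (S * Kᴴ * T * K).trace := by
  have h1 : (Kᴴ * T * K).PosSemidef := hT.conjTranspose_mul_mul_same K
  obtain ⟨R, hR, hRR⟩ := aux_sqrt_exists hS
  have h2 : S * Kᴴ * T * K = R * R * (Kᴴ * T * K) := by
    rw [hRR]; simp only [Matrix.mul_assoc]
  have h3 : (R * R * (Kᴴ * T * K)).trace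
      = (R * (Kᴴ * T * K) * R).trace := by
    rw [Matrix.mul_assoc, Matrix.trace_mul_comm, Matrix.mul_assoc]
  have h4 : (R * (Kᴴ * T * K) * R).PosSemidef := by
    have := h1.conjTranspose_mul_mul_same (B := R)
    rwa [hR.isHermitian.eq] at this
  rw [h2, h3]
  exact aux_psd_trace_nonneg h4

lemma aux_sum_smul_diag_single {m : ℕ} (f : Fin m → ℂ) :
    ∑ k, f k • Matrix.diagonal (Pi.single k (1:ℂ)) = Matrix.diagonal f := by
  ext i j
  simp only [Matrix.sum_apply, Matrix.smul_apply, Matrix.diagonal_apply, Pi.single_apply,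
    smul_eq_mul]
  by_cases h : i = j
  · subst h; simp
  · simp [h]

lemma aux_decomp {m : ℕ} {C W : Matrix (Fin m) (Fin m) ℂ} (hC : C.PosDef) (hW : W.PosDef) :
    ∃ (u : Fin m → ℝ) (P : Fin m → Matrix (Fin m) (Fin m) ℂ),
      (∀ k, 0 ≤ u k) ∧ (∀ k, (P k).PosSemidef) ∧
      C⁻¹ = ∑ k, ((u k : ℂ)) • P k ∧
      C⁻¹ * W * C⁻¹ = ∑ k, ((u k : ℂ))^2 • P k ∧
      W⁻¹ = ∑ k, P k := by
  classical
  obtain ⟨V, hVpsd, hVV⟩ := aux_sqrt_exists hW.posSemidef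
  have hVH : V.IsHermitian := hVpsd.isHermitian
  have hdetW : W.det ≠ 0 := ne_of_gt hW.det_pos
  have hdetV : IsUnit V.det := by
    rw [← hVV, Matrix.det_mul] at hdetW
    exact isUnit_iff_ne_zero.mpr (by intro h; apply hdetW; rw [h]; ring)
  have hVinv : V * V⁻¹ = 1 := Matrix.mul_nonsing_inv V hdetV
  have hVinv' : V⁻¹ * V = 1 := Matrix.nonsing_inv_mul V hdetV
  have hVc1 : ∀ M : Matrix (Fin m) (Fin m) ℂ, V⁻¹ * (V * M) = M := by
    intro M; rw [← Matrix.mul_assoc, hVinv', Matrix.one_mul]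
  have hVc2 : ∀ M : Matrix (Fin m) (Fin m) ℂ, V * (V⁻¹ * M) = M := by
    intro M; rw [← Matrix.mul_assoc, hVinv, Matrix.one_mul]
  have hVinvH : V⁻¹.IsHermitian := hVH.inv
  have hCinv : C⁻¹.PosDef := hC.inv
  set N := V * C⁻¹ * V with hNdef
  have hNpsd : N.PosSemidef := by
    have := hCinv.posSemidef.conjTranspose_mul_mul_same (B := V)
    rwa [hVH.eq] at this
  have hNH : N.IsHermitian := hNpsd.isHermitian
  set u := hNH.eigenvalues with hudef
  set U := (hNH.eigenvectorUnitary : Matrix (Fin m) (Fin m) ℂ) with hUdef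
  have hUU : U * star U = 1 := Matrix.mem_unitaryGroup_iff.mp hNH.eigenvectorUnitary.2
  have hUU' : star U * U = 1 := Matrix.mem_unitaryGroup_iff'.mp hNH.eigenvectorUnitary.2
  have hUc : ∀ M : Matrix (Fin m) (Fin m) ℂ, star U * (U * M) = M := by
    intro M; rw [← Matrix.mul_assoc, hUU', Matrix.one_mul]
  have spec : N = U * Matrix.diagonal (RCLike.ofReal ∘ u) * star U := hNH.spectral_theorem
  set E : Fin m → Matrix (Fin m) (Fin m) ℂ :=
    fun k => U * Matrix.diagonal (Pi.single k (1:ℂ)) * star U with hEdef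
  have hEpsd : ∀ k, (E k).PosSemidef := by
    intro k
    have hd : (Matrix.diagonal (Pi.single k (1:ℂ))).PosSemidef := by
      refine Matrix.posSemidef_diagonal_iff.mpr fun i => ?_
      rcases eq_or_ne i k with h|h <;> simp [Pi.single_apply, h]
    exact hd.mul_mul_conjTranspose_same (B := U)
  have keysum : ∀ f : Fin m → ℂ, ∑ k, f k • E k = U * Matrix.diagonal f * star U := by
    intro f
    rw [← aux_sum_smul_diag_single f]
    simp only [hEdef, Matrix.mul_sum, Matrix.sum_mul, Matrix.mul_smul, Matrix.smul_mul]
  have hcoe : (fun k => ((u k : ℂ))) = RCLike.ofReal ∘ u := by funext k; rfl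
  have hNsum : N = ∑ k, ((u k : ℂ)) • E k := by rw [keysum, hcoe, ← spec]
  have hNNsum : N * N = ∑ k, ((u k : ℂ))^2 • E k := by
    have h2 : (fun k => ((u k : ℂ))^2)
        = fun k => (RCLike.ofReal ∘ u) k * (RCLike.ofReal ∘ u) k := by
      funext k; simp [Function.comp, pow_two]
    rw [keysum, h2, ← Matrix.diagonal_mul_diagonal, spec]
    simp only [Matrix.mul_assoc, hUc]
  have hC1 : C⁻¹ = V⁻¹ * N * V⁻¹ := by
    rw [hNdef]
    simp only [Matrix.mul_assoc, hVc1, hVc2, hVinv, Matrix.mul_one]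
  refine ⟨u, fun k => V⁻¹ * E k * V⁻¹, fun k => hNpsd.eigenvalues_nonneg k, ?_, ?_, ?_, ?_⟩
  · intro k
    have := (hEpsd k).conjTranspose_mul_mul_same (B := V⁻¹)
    rwa [hVinvH.eq] at this
  · rw [hC1, hNsum]
    simp only [Matrix.sum_mul, Matrix.mul_sum, Matrix.smul_mul, Matrix.mul_smul]
  · rw [hC1, ← hVV]
    have : V⁻¹ * N * V⁻¹ * (V * V) * (V⁻¹ * N * V⁻¹) = V⁻¹ * (N * N) * V⁻¹ := by
      simp only [Matrix.mul_assoc, hVc1, hVc2]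
    rw [this, hNNsum]
    simp only [Matrix.sum_mul, Matrix.mul_sum, Matrix.smul_mul, Matrix.mul_smul]
  · have hWinv : W⁻¹ = V⁻¹ * V⁻¹ := by rw [← hVV, Matrix.mul_inv_rev]
    have hone : (1 : Matrix (Fin m) (Fin m) ℂ) = ∑ k, E k := by
      have := keysum (fun _ => (1:ℂ))
      simp only [one_smul] at this
      rw [this, Matrix.diagonal_one, Matrix.mul_one, hUU]
    rw [hWinv, show V⁻¹ * V⁻¹ = V⁻¹ * 1 * V⁻¹ by rw [Matrix.mul_one], hone]
    simp only [Matrix.sum_mul, Matrix.mul_sum]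

lemma aux_expand_trace {m n : ℕ} (Φ : Matrix (Fin m) (Fin m) ℂ →ₗ[ℂ] Matrix (Fin n) (Fin n) ℂ)
    (K : Matrix (Fin n) (Fin n) ℂ) (P Q : Fin m → Matrix (Fin m) (Fin m) ℂ)
    (a b : Fin m → ℂ) :
    (Φ (∑ k, a k • P k) * Kᴴ * Φ (∑ l, b l • Q l) * K).trace
      = ∑ k, ∑ l, a k * b l * (Φ (P k) * Kᴴ * Φ (Q l) * K).trace := by
  simp only [map_sum, _root_.map_smul, Matrix.sum_mul, Matrix.mul_sum, Matrix.smul_mul,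
    Matrix.mul_smul, Matrix.trace_sum, Matrix.trace_smul, smul_eq_mul]
  simp only [Finset.mul_sum]
  rw [Finset.sum_comm]
  refine Finset.sum_congr rfl fun k _ => Finset.sum_congr rfl fun l _ => by ring

lemma aux_key_ineq {m n : ℕ} (Φ : Matrix (Fin m) (Fin m) ℂ →ₗ[ℂ] Matrix (Fin n) (Fin n) ℂ)
    (hΦ : ∀ A : Matrix (Fin m) (Fin m) ℂ, A.PosSemidef → (Φ A).PosSemidef)
    (K : Matrix (Fin n) (Fin n) ℂ)
    {C1 W1 C2 W2 : Matrix (Fin m) (Fin m) ℂ}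
    (hC1 : C1.PosDef) (hW1 : W1.PosDef) (hC2 : C2.PosDef) (hW2 : W2.PosDef) :
    3 * ((Φ C1⁻¹ * Kᴴ * Φ C2⁻¹ * K).trace).re
      ≤ ((Φ (C1⁻¹ * W1 * C1⁻¹) * Kᴴ * Φ C2⁻¹ * K).trace).re
        + ((Φ C1⁻¹ * Kᴴ * Φ (C2⁻¹ * W2 * C2⁻¹) * K).trace).re
        + ((Φ W1⁻¹ * Kᴴ * Φ W2⁻¹ * K).trace).re := by
  obtain ⟨u, P, hu, hP, e1, e2, e3⟩ := aux_decomp hC1 hW1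
  obtain ⟨v, Q, hv, hQ, f1, f2, f3⟩ := aux_decomp hC2 hW2
  set g : Fin m → Fin m → ℝ := fun k l => ((Φ (P k) * Kᴴ * Φ (Q l) * K).trace).re with hgdef
  have hgpos : ∀ k l, 0 ≤ g k l := fun k l =>
    (Complex.le_def.mp (aux_trace_pair_nonneg K (hΦ _ (hP k)) (hΦ _ (hQ l)))).1
  have e3' : W1⁻¹ = ∑ k, ((fun _ => (1:ℂ)) k) • P k := by rw [e3]; simp
  have f3' : W2⁻¹ = ∑ l, ((fun _ => (1:ℂ)) l) • Q l := by rw [f3]; simp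
  have conv1 : ∀ (a b : Fin m → ℝ),
      (∑ k, ∑ l, ((a k : ℂ)) * ((b l : ℂ)) * (Φ (P k) * Kᴴ * Φ (Q l) * K).trace).re
        = ∑ k, ∑ l, (a k * b l) * g k l := by
    intro a b
    rw [Complex.re_sum]
    refine Finset.sum_congr rfl fun k _ => ?_
    rw [Complex.re_sum]
    refine Finset.sum_congr rfl fun l _ => ?_
    rw [show ((a k : ℂ)) * ((b l : ℂ)) * (Φ (P k) * Kᴴ * Φ (Q l) * K).trace
        = ((a k * b l : ℝ) : ℂ) * (Φ (P k) * Kᴴ * Φ (Q l) * K).trace by push_cast; ring]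
    exact Complex.re_ofReal_mul _ _
  have H1 : ((Φ C1⁻¹ * Kᴴ * Φ C2⁻¹ * K).trace).re = ∑ k, ∑ l, (u k * v l) * g k l := by
    rw [e1, f1, aux_expand_trace]; exact conv1 u v
  have H2 : ((Φ (C1⁻¹ * W1 * C1⁻¹) * Kᴴ * Φ C2⁻¹ * K).trace).re
      = ∑ k, ∑ l, ((u k)^2 * v l) * g k l := by
    rw [e2, f1]
    rw [show (∑ k, ((u k : ℂ))^2 • P k) = ∑ k, (((((u k)^2 : ℝ)) : ℂ)) • P k by push_cast; rfl]
    rw [aux_expand_trace]; exact conv1 (fun k => (u k)^2) v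
  have H3 : ((Φ C1⁻¹ * Kᴴ * Φ (C2⁻¹ * W2 * C2⁻¹) * K).trace).re
      = ∑ k, ∑ l, (u k * (v l)^2) * g k l := by
    rw [e1, f2]
    rw [show (∑ l, ((v l : ℂ))^2 • Q l) = ∑ l, (((((v l)^2 : ℝ)) : ℂ)) • Q l by push_cast; rfl]
    rw [aux_expand_trace]; exact conv1 u (fun l => (v l)^2)
  have H4 : ((Φ W1⁻¹ * Kᴴ * Φ W2⁻¹ * K).trace).re
      = ∑ k, ∑ l, (1 * 1) * g k l := by
    rw [e3', f3']
    rw [show (∑ k, ((fun _ => (1:ℂ)) k) • P k) = ∑ k, ((((1:ℝ)) : ℂ)) • P k by norm_num]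
    rw [show (∑ l, ((fun _ => (1:ℂ)) l) • Q l) = ∑ l, ((((1:ℝ)) : ℂ)) • Q l by norm_num]
    rw [aux_expand_trace]; exact conv1 (fun _ => 1) (fun _ => 1)
  rw [H1, H2, H3, H4]
  rw [Finset.mul_sum]
  rw [← Finset.sum_add_distrib, ← Finset.sum_add_distrib]
  refine Finset.sum_le_sum fun k _ => ?_
  rw [Finset.mul_sum, ← Finset.sum_add_distrib, ← Finset.sum_add_distrib]
  refine Finset.sum_le_sum fun l _ => ?_
  have hamgm : 3 * (u k * v l) ≤ (u k)^2 * v l + u k * (v l)^2 + 1 := by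
    nlinarith [sq_nonneg (u k - 1), sq_nonneg (v l - 1), sq_nonneg (u k - v l),
      sq_nonneg (u k * v l - 1), mul_nonneg (hu k) (hv l),
      mul_nonneg (hu k) (sq_nonneg (v l - 1)), mul_nonneg (hv l) (sq_nonneg (u k - 1))]
  have := mul_le_mul_of_nonneg_right hamgm (hgpos k l)
  nlinarith [this]

lemma aux_real_smul_posSemidef {m : ℕ} {r : ℝ} (hr : 0 ≤ r) {M : Matrix (Fin m) (Fin m) ℂ}
    (hM : M.PosSemidef) : (r • M).PosSemidef := by
  have h : (r • M) = ((r:ℂ)) • M := by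
    ext i j; simp [Matrix.smul_apply, Complex.real_smul]
  rw [h]
  refine Matrix.posSemidef_iff_dotProduct_mulVec.mpr ⟨?_, ?_⟩
  · have := hM.1
    unfold Matrix.IsHermitian at *
    rw [Matrix.conjTranspose_smul, this, Complex.star_def, Complex.conj_ofReal]
  · intro x
    rw [Matrix.smul_mulVec, dotProduct_smul]
    have := hM.dotProduct_mulVec_nonneg x
    rw [smul_eq_mul]
    exact mul_nonneg (Complex.zero_le_real.mpr hr) this

lemma aux_real_smul_posDef {m : ℕ} {r : ℝ} (hr : 0 < r) {M : Matrix (Fin m) (Fin m) ℂ}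
    (hM : M.PosDef) : (r • M).PosDef := by
  have h : (r • M) = ((r:ℂ)) • M := by
    ext i j; simp [Matrix.smul_apply, Complex.real_smul]
  rw [h]
  refine Matrix.posDef_iff_dotProduct_mulVec.mpr ⟨?_, ?_⟩
  · have := hM.1
    unfold Matrix.IsHermitian at *
    rw [Matrix.conjTranspose_smul, this, Complex.star_def, Complex.conj_ofReal]
  · intro x hx
    rw [Matrix.smul_mulVec, dotProduct_smul]
    have := hM.dotProduct_mulVec_pos hx
    rw [smul_eq_mul]
    have hr' : (0:ℂ) < (r:ℂ) := by
      rw [Complex.lt_def]; constructor <;> simp [hr]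
    exact mul_pos hr' this

lemma aux_smul_one_posSemidef {m : ℕ} {r : ℝ} (hr : 0 ≤ r) :
    (((r:ℂ)) • (1 : Matrix (Fin m) (Fin m) ℂ)).PosSemidef := by
  have h : ((r:ℂ)) • (1 : Matrix (Fin m) (Fin m) ℂ) = r • (1 : Matrix (Fin m) (Fin m) ℂ) := by
    ext i j; simp [Matrix.smul_apply, Complex.real_smul]
  rw [h]
  exact aux_real_smul_posSemidef hr Matrix.PosSemidef.one

end AuxTraceResolvent

/-- For `f₁(x) = 1/(λ+x)`, `f₂(x) = 1/(μ+x)`, a positive linear map `Φ` and a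
matrix `K`, the map `X ↦ Tr(Φ(f₁(X)) K* Φ(f₂(X)) K)` is convex on positive
definite matrices (the trace being real-valued). -/
theorem trace_resolvent_convex {m n : ℕ} (l μ : ℝ) (hl : 0 ≤ l) (hμ : 0 ≤ μ)
    (Φ : Matrix (Fin m) (Fin m) ℂ →ₗ[ℂ] Matrix (Fin n) (Fin n) ℂ)
    (hΦ : ∀ A : Matrix (Fin m) (Fin m) ℂ, A.PosSemidef → (Φ A).PosSemidef)
    (K : Matrix (Fin n) (Fin n) ℂ)
    (X Y : Matrix (Fin m) (Fin m) ℂ) (hX : X.PosDef) (hY : Y.PosDef)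
    (t : ℝ) (ht0 : 0 ≤ t) (ht1 : t ≤ 1) :
    ((Φ (((l : ℂ) • 1 + (t • X + (1 - t) • Y))⁻¹) * Kᴴ *
        Φ (((μ : ℂ) • 1 + (t • X + (1 - t) • Y))⁻¹) * K).trace).re ≤
      t * ((Φ (((l : ℂ) • 1 + X)⁻¹) * Kᴴ * Φ (((μ : ℂ) • 1 + X)⁻¹) * K).trace).re +
      (1 - t) * ((Φ (((l : ℂ) • 1 + Y)⁻¹) * Kᴴ * Φ (((μ : ℂ) • 1 + Y)⁻¹) * K).trace).re := by
  set Z := t • X + (1 - t) • Y with hZdef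
  have hZ : Z.PosDef := by
    rcases eq_or_lt_of_le ht0 with h0 | h0
    · have hz : Z = Y := by rw [hZdef, ← h0]; simp
      rw [hz]; exact hY
    · exact (aux_real_smul_posDef h0 hX).add_posSemidef
        (aux_real_smul_posSemidef (by linarith) hY.posSemidef)
  set A1 := (l:ℂ) • (1 : Matrix (Fin m) (Fin m) ℂ) + X with hA1def
  set A2 := (μ:ℂ) • (1 : Matrix (Fin m) (Fin m) ℂ) + X with hA2def
  set B1 := (l:ℂ) • (1 : Matrix (Fin m) (Fin m) ℂ) + Y with hB1def
  set B2 := (μ:ℂ) • (1 : Matrix (Fin m) (Fin m) ℂ) + Y with hB2def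
  set C1 := (l:ℂ) • (1 : Matrix (Fin m) (Fin m) ℂ) + Z with hC1def
  set C2 := (μ:ℂ) • (1 : Matrix (Fin m) (Fin m) ℂ) + Z with hC2def
  have hA1 : A1.PosDef := Matrix.PosDef.posSemidef_add (aux_smul_one_posSemidef hl) hX
  have hA2 : A2.PosDef := Matrix.PosDef.posSemidef_add (aux_smul_one_posSemidef hμ) hX
  have hB1 : B1.PosDef := Matrix.PosDef.posSemidef_add (aux_smul_one_posSemidef hl) hY
  have hB2 : B2.PosDef := Matrix.PosDef.posSemidef_add (aux_smul_one_posSemidef hμ) hY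
  have hC1 : C1.PosDef := Matrix.PosDef.posSemidef_add (aux_smul_one_posSemidef hl) hZ
  have hC2 : C2.PosDef := Matrix.PosDef.posSemidef_add (aux_smul_one_posSemidef hμ) hZ
  have hC1inv : C1⁻¹ * C1 = 1 := Matrix.nonsing_inv_mul _ hC1.det_pos.ne'.isUnit
  have hC2inv : C2⁻¹ * C2 = 1 := Matrix.nonsing_inv_mul _ hC2.det_pos.ne'.isUnit
  have hcomb1 : t • A1 + (1 - t) • B1 = C1 := by
    rw [hA1def, hB1def, hC1def, hZdef]
    ext i j
    simp only [Matrix.add_apply, Matrix.smul_apply, Matrix.one_apply, Complex.real_smul,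
      smul_eq_mul]
    push_cast
    ring
  have hcomb2 : t • A2 + (1 - t) • B2 = C2 := by
    rw [hA2def, hB2def, hC2def, hZdef]
    ext i j
    simp only [Matrix.add_apply, Matrix.smul_apply, Matrix.one_apply, Complex.real_smul,
      smul_eq_mul]
    push_cast
    ring
  have key1 : t • (C1⁻¹ * A1 * C1⁻¹) + (1 - t) • (C1⁻¹ * B1 * C1⁻¹) = C1⁻¹ := by
    have h : t • (C1⁻¹ * A1 * C1⁻¹) + (1 - t) • (C1⁻¹ * B1 * C1⁻¹)
        = C1⁻¹ * (t • A1 + (1 - t) • B1) * C1⁻¹ := by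
      simp only [Matrix.mul_add, Matrix.add_mul, Matrix.mul_smul, Matrix.smul_mul]
    rw [h, hcomb1, hC1inv, Matrix.one_mul]
  have key2 : t • (C2⁻¹ * A2 * C2⁻¹) + (1 - t) • (C2⁻¹ * B2 * C2⁻¹) = C2⁻¹ := by
    have h : t • (C2⁻¹ * A2 * C2⁻¹) + (1 - t) • (C2⁻¹ * B2 * C2⁻¹)
        = C2⁻¹ * (t • A2 + (1 - t) • B2) * C2⁻¹ := by
      simp only [Matrix.mul_add, Matrix.add_mul, Matrix.mul_smul, Matrix.smul_mul]
    rw [h, hcomb2, hC2inv, Matrix.one_mul]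
  -- real-combination of traces, first slot
  have combo1 : ∀ (M M' N : Matrix (Fin m) (Fin m) ℂ),
      ((Φ (t • M + (1 - t) • M') * Kᴴ * Φ N * K).trace).re
        = t * ((Φ M * Kᴴ * Φ N * K).trace).re
          + (1 - t) * ((Φ M' * Kᴴ * Φ N * K).trace).re := by
    intro M M' N
    have hM : t • M = ((t:ℂ)) • M := by
      ext i j; simp [Matrix.smul_apply, Complex.real_smul]
    have hM' : (1 - t) • M' = (((1 - t : ℝ):ℂ)) • M' := by
      ext i j; simp [Matrix.smul_apply, Complex.real_smul]
    rw [hM, hM', map_add, _root_.map_smul, _root_.map_smul]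
    simp only [Matrix.add_mul, Matrix.smul_mul, Matrix.trace_add, Matrix.trace_smul, smul_eq_mul]
    rw [Complex.add_re, Complex.re_ofReal_mul, Complex.re_ofReal_mul]
  have combo2 : ∀ (M M' N : Matrix (Fin m) (Fin m) ℂ),
      ((Φ N * Kᴴ * Φ (t • M + (1 - t) • M') * K).trace).re
        = t * ((Φ N * Kᴴ * Φ M * K).trace).re
          + (1 - t) * ((Φ N * Kᴴ * Φ M' * K).trace).re := by
    intro M M' N
    have hM : t • M = ((t:ℂ)) • M := by
      ext i j; simp [Matrix.smul_apply, Complex.real_smul]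
    have hM' : (1 - t) • M' = (((1 - t : ℝ):ℂ)) • M' := by
      ext i j; simp [Matrix.smul_apply, Complex.real_smul]
    rw [hM, hM', map_add, _root_.map_smul, _root_.map_smul]
    simp only [Matrix.mul_add, Matrix.add_mul, Matrix.mul_smul, Matrix.smul_mul,
      Matrix.trace_add, Matrix.trace_smul, smul_eq_mul]
    rw [Complex.add_re, Complex.re_ofReal_mul, Complex.re_ofReal_mul]
  have KA := aux_key_ineq Φ hΦ K hC1 hA1 hC2 hA2
  have KB := aux_key_ineq Φ hΦ K hC1 hB1 hC2 hB2
  have E1 : t * ((Φ (C1⁻¹ * A1 * C1⁻¹) * Kᴴ * Φ C2⁻¹ * K).trace).re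
      + (1 - t) * ((Φ (C1⁻¹ * B1 * C1⁻¹) * Kᴴ * Φ C2⁻¹ * K).trace).re
      = ((Φ C1⁻¹ * Kᴴ * Φ C2⁻¹ * K).trace).re := by
    rw [← combo1, key1]
  have E2 : t * ((Φ C1⁻¹ * Kᴴ * Φ (C2⁻¹ * A2 * C2⁻¹) * K).trace).re
      + (1 - t) * ((Φ C1⁻¹ * Kᴴ * Φ (C2⁻¹ * B2 * C2⁻¹) * K).trace).re
      = ((Φ C1⁻¹ * Kᴴ * Φ C2⁻¹ * K).trace).re := by
    rw [← combo2, key2]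
  have HA := mul_le_mul_of_nonneg_left KA ht0
  have HB := mul_le_mul_of_nonneg_left KB (by linarith : (0:ℝ) ≤ 1 - t)
  nlinarith [HA, HB, E1, E2]
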